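/- After three Lüders measurements of randomly chosen Yu–Oh projectors on a Yu–Oh state, exactly 265 distinct rays can occur: the set S₃ is finite and has cardinality 265. -/

import Mathlib

set_option maxHeartbeats 2000000

open scoped InnerProductSpace

noncomputable def v : Fin 13 → EuclideanSpace ℂ (Fin 3) :=
  ![!₂[1, 0, 0], !₂[0, 1, 0], !₂[0, 0, 1],
    !₂[0, 1, -1], !₂[0, 1, 1], !₂[1, 0, -1], !₂[1, 0, 1], !₂[1, -1, 0], !₂[1, 1, 0],
    !₂[1, 1, 1], !₂[-1, 1, 1], !₂[1, -1, 1], !₂[1, 1, -1]]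

noncomputable def P (i : Fin 13) (w : EuclideanSpace ℂ (Fin 3)) : EuclideanSpace ℂ (Fin 3) :=
  ((Submodule.span ℂ {v i}).orthogonalProjectionOnto w : EuclideanSpace ℂ (Fin 3))

abbrev Z3 := ℤ × ℤ × ℤ

def vz : Fin 13 → Z3 :=
  ![(1,0,0),(0,1,0),(0,0,1),(0,1,-1),(0,1,1),(1,0,-1),(1,0,1),(1,-1,0),(1,1,0),
    (1,1,1),(-1,1,1),(1,-1,1),(1,1,-1)]

noncomputable def cz (q : Z3) : EuclideanSpace ℂ (Fin 3) := !₂[(q.1 : ℂ), (q.2.1 : ℂ), (q.2.2 : ℂ)]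

def dotZ (a b : Z3) : ℤ := a.1*b.1 + a.2.1*b.2.1 + a.2.2*b.2.2

lemma cz_smul (t : ℤ) (q : Z3) : cz (t • q) = (t : ℂ) • cz q := by
  ext j
  fin_cases j <;> simp [cz] <;> push_cast <;> ring

lemma cz_sub (a b : Z3) : cz (a - b) = cz a - cz b := by
  ext j
  fin_cases j <;> simp [cz] <;> push_cast <;> ring

lemma cz_eq_zero {q : Z3} : cz q = 0 ↔ q = 0 := by
  obtain ⟨a, b, c⟩ := q
  constructor
  · intro h
    have h0 := congrArg (· 0) h
    have h1 := congrArg (· 1) h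
    have h2 := congrArg (· 2) h
    simp [cz] at h0 h1 h2
    simp [h0, h1, h2, Prod.ext_iff]
  · intro h
    rw [Prod.ext_iff, Prod.ext_iff] at h
    obtain ⟨h0, h1, h2⟩ := h
    simp only at h0 h1 h2
    subst h0; subst h1; subst h2
    ext j; fin_cases j <;> simp [cz]

lemma inner_cz (a b : Z3) : ⟪cz a, cz b⟫_ℂ = (dotZ a b : ℂ) := by
  simp [cz, dotZ, PiLp.inner_apply, Fin.sum_univ_three, RCLike.inner_apply]
  ring

lemma v_eq (i : Fin 13) : v i = cz (vz i) := by
  fin_cases i <;> (ext j; fin_cases j <;> norm_num [v, vz, cz])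

lemma normSq_cz (a : Z3) : (RCLike.ofReal (‖cz a‖ ^ 2) : ℂ) = (dotZ a a : ℂ) := by
  rw [← inner_cz a a, inner_self_eq_norm_sq_to_K, RCLike.ofReal_pow]

noncomputable def spanZ (q : Z3) : Submodule ℂ (EuclideanSpace ℂ (Fin 3)) :=
  Submodule.span ℂ {cz q}

lemma dotZ_self_pos (i : Fin 13) : 0 < dotZ (vz i) (vz i) := by
  fin_cases i <;> decide

def residZ (i : Fin 13) (q : Z3) : Z3 := dotZ (vz i) (vz i) • q - dotZ (vz i) q • vz i

lemma P_cz (i : Fin 13) (q : Z3) :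
    P i (cz q) = ((dotZ (vz i) q : ℂ) / (dotZ (vz i) (vz i) : ℂ)) • cz (vz i) := by
  rw [P, Submodule.coe_orthogonalProjectionOnto_apply, Submodule.starProjection_singleton, v_eq, inner_cz, normSq_cz]

lemma P_smul (i : Fin 13) (z : ℂ) (w : EuclideanSpace ℂ (Fin 3)) :
    P i (z • w) = z • P i w := by
  simp [P]

def sg (q : Z3) : ℤ := if q.1 ≠ 0 then Int.sign q.1 else if q.2.1 ≠ 0 then Int.sign q.2.1 else Int.sign q.2.2

def gz (q : Z3) : ℤ := (Int.gcd q.1 (Int.gcd q.2.1 q.2.2) : ℤ)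

def normZ (q : Z3) : Z3 :=
  (q.1 / (sg q * gz q), q.2.1 / (sg q * gz q), q.2.2 / (sg q * gz q))

lemma sign_pm {x : ℤ} (hx : x ≠ 0) : x.sign = 1 ∨ x.sign = -1 := by
  rcases lt_trichotomy x 0 with h | h | h
  · right; exact Int.sign_eq_neg_one_of_neg h
  · exact absurd h hx
  · left; exact Int.sign_eq_one_of_pos h

lemma norm_scale {q : Z3} (hq : q ≠ 0) : ∃ g : ℤ, g ≠ 0 ∧ g • normZ q = q := by
  obtain ⟨a, b, c⟩ := q
  have hne : ¬(a = 0 ∧ b = 0 ∧ c = 0) := by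
    intro ⟨h1, h2, h3⟩; exact hq (by simp [Prod.ext_iff, h1, h2, h3])
  set d : ℤ := sg (a, b, c) * gz (a, b, c) with hd
  have hsg : sg (a, b, c) = 1 ∨ sg (a, b, c) = -1 := by
    simp only [sg]
    split_ifs with h1 h2 <;>
      first
        | exact sign_pm (by assumption)
        | exact sign_pm (fun hc => hne ⟨not_not.mp h1, not_not.mp h2, hc⟩)
  have hgz : gz (a, b, c) ≠ 0 := by
    simp only [gz]
    intro h
    rw [Int.natCast_eq_zero, Int.gcd_eq_zero_iff, Int.natCast_eq_zero, Int.gcd_eq_zero_iff] at h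
    exact hne ⟨h.1, h.2⟩
  have hdvd : ∀ x : ℤ, x = a ∨ x = b ∨ x = c → d ∣ x := by
    rintro x hx
    have hgd : gz (a, b, c) ∣ x := by
      rcases hx with rfl | rfl | rfl
      · exact Int.gcd_dvd_left _ _
      · exact dvd_trans (Int.gcd_dvd_right _ _) (Int.gcd_dvd_left _ _)
      · exact dvd_trans (Int.gcd_dvd_right _ _) (Int.gcd_dvd_right _ _)
    rcases hsg with h | h
    · rw [hd, h, one_mul]; exact hgd
    · rw [hd, h]; simpa using (dvd_neg.mpr hgd)
  have hdne : d ≠ 0 := by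
    rcases hsg with h | h <;> simp [hd, h, hgz]
  refine ⟨d, hdne, ?_⟩
  have h1 : d * (a / d) = a := Int.mul_ediv_cancel' (hdvd a (Or.inl rfl))
  have h2 : d * (b / d) = b := Int.mul_ediv_cancel' (hdvd b (Or.inr (Or.inl rfl)))
  have h3 : d * (c / d) = c := Int.mul_ediv_cancel' (hdvd c (Or.inr (Or.inr rfl)))
  simp [normZ, Prod.ext_iff, ← hd, smul_eq_mul, h1, h2, h3]

lemma normZ_ne_zero {q : Z3} (hq : q ≠ 0) : normZ q ≠ 0 := by
  obtain ⟨g, hg, hgq⟩ := norm_scale hq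
  intro h
  rw [h, smul_zero] at hgq
  exact hq hgq.symm

lemma spanZ_smul {q : Z3} {t : ℤ} (ht : t ≠ 0) : spanZ (t • q) = spanZ q := by
  rw [spanZ, spanZ, cz_smul]
  exact Submodule.span_singleton_smul_eq (IsUnit.mk0 _ (by exact_mod_cast ht)) _

lemma spanZ_normZ {q : Z3} (hq : q ≠ 0) : spanZ (normZ q) = spanZ q := by
  obtain ⟨g, hg, hgq⟩ := norm_scale hq
  conv_rhs => rw [← hgq]
  exact (spanZ_smul hg).symm

lemma vz_ne_zero (i : Fin 13) : vz i ≠ 0 := by fin_cases i <;> decide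

lemma cz_vz_ne_zero (i : Fin 13) : cz (vz i) ≠ 0 :=
  fun h => vz_ne_zero i (cz_eq_zero.mp h)

lemma nC_ne_zero (i : Fin 13) : ((dotZ (vz i) (vz i) : ℤ) : ℂ) ≠ 0 :=
  Int.cast_ne_zero.mpr (dotZ_self_pos i).ne'

lemma P_smul_cz (i : Fin 13) (z : ℂ) (q : Z3) :
    P i (z • cz q) = (z * ((dotZ (vz i) q : ℂ) / (dotZ (vz i) (vz i) : ℂ))) • cz (vz i) := by
  rw [P_smul, P_cz, smul_smul]

lemma resid_eq (i : Fin 13) (z : ℂ) (q : Z3) :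
    z • cz q - P i (z • cz q) = (z / (dotZ (vz i) (vz i) : ℂ)) • cz (residZ i q) := by
  rw [P_smul_cz, residZ, cz_sub, cz_smul, cz_smul, smul_sub, smul_smul, smul_smul]
  have hn := nC_ne_zero i
  congr 1 <;> field_simp <;> ring

lemma P_ne_iff (i : Fin 13) {z : ℂ} (hz : z ≠ 0) (q : Z3) :
    P i (z • cz q) ≠ 0 ↔ dotZ (vz i) q ≠ 0 := by
  rw [P_smul_cz]
  rw [ne_eq, smul_eq_zero, not_or]
  constructor
  · intro ⟨h, _⟩
    intro hd
    exact h (by rw [hd]; simp)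
  · intro hd
    exact ⟨mul_ne_zero hz (div_ne_zero (Int.cast_ne_zero.mpr hd) (nC_ne_zero i)), cz_vz_ne_zero i⟩

lemma span_P (i : Fin 13) {z : ℂ} (hz : z ≠ 0) {q : Z3} (hd : dotZ (vz i) q ≠ 0) :
    Submodule.span ℂ {P i (z • cz q)} = spanZ (vz i) := by
  rw [P_smul_cz, spanZ]
  refine Submodule.span_singleton_smul_eq (IsUnit.mk0 _ ?_) _
  exact mul_ne_zero hz (div_ne_zero (Int.cast_ne_zero.mpr hd) (nC_ne_zero i))

lemma resid_ne_iff (i : Fin 13) {z : ℂ} (hz : z ≠ 0) (q : Z3) :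
    z • cz q - P i (z • cz q) ≠ 0 ↔ residZ i q ≠ 0 := by
  rw [resid_eq]
  have hn := nC_ne_zero i
  rw [ne_eq, smul_eq_zero, not_or, div_eq_zero_iff]
  constructor
  · intro ⟨_, h⟩ hr
    exact h (by rw [hr]; exact cz_eq_zero.mpr rfl)
  · intro hr
    exact ⟨by push_neg; exact ⟨hz, hn⟩, fun h => hr (cz_eq_zero.mp h)⟩

lemma span_resid (i : Fin 13) {z : ℂ} (hz : z ≠ 0) (q : Z3) :
    Submodule.span ℂ {z • cz q - P i (z • cz q)} = spanZ (residZ i q) := by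
  rw [resid_eq, spanZ]
  refine Submodule.span_singleton_smul_eq (IsUnit.mk0 _ ?_) _
  exact div_ne_zero hz (nC_ne_zero i)

noncomputable def S : ℕ → Set (Submodule ℂ (EuclideanSpace ℂ (Fin 3)))
  | 0 => {L | ∃ i : Fin 13, L = Submodule.span ℂ {v i}}
  | (n + 1) => {L | ∃ L' ∈ S n, ∃ w ∈ L', w ≠ 0 ∧ ∃ i : Fin 13,
      (P i w ≠ 0 ∧ L = Submodule.span ℂ {P i w}) ∨
      (w - P i w ≠ 0 ∧ L = Submodule.span ℂ {w - P i w})}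

def stepSet (T : Set Z3) : Set Z3 :=
  {r | ∃ q ∈ T, ∃ i : Fin 13,
    (dotZ (vz i) q ≠ 0 ∧ r = normZ (vz i)) ∨ (residZ i q ≠ 0 ∧ r = normZ (residZ i q))}

lemma S_succ_eq {n : ℕ} {T : Set Z3} (hT : ∀ q ∈ T, q ≠ 0)
    (h : S n = spanZ '' T) : S (n + 1) = spanZ '' stepSet T := by
  ext L
  simp only [S, h, Set.mem_image, Set.mem_setOf_eq]
  constructor
  · rintro ⟨L', ⟨q, hqT, rfl⟩, w, hw, hw0, i, hcase⟩
    have hq : q ≠ 0 := hT q hqT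
    rw [spanZ, Submodule.mem_span_singleton] at hw
    obtain ⟨z, rfl⟩ := hw
    have hz : z ≠ 0 := fun h => hw0 (by rw [h, zero_smul])
    rcases hcase with ⟨hne, rfl⟩ | ⟨hne, rfl⟩
    · have hd : dotZ (vz i) q ≠ 0 := (P_ne_iff i hz q).mp hne
      refine ⟨normZ (vz i), ⟨q, hqT, i, Or.inl ⟨hd, rfl⟩⟩, ?_⟩
      rw [spanZ_normZ (vz_ne_zero i), span_P i hz hd]
    · have hr : residZ i q ≠ 0 := (resid_ne_iff i hz q).mp hne
      refine ⟨normZ (residZ i q), ⟨q, hqT, i, Or.inr ⟨hr, rfl⟩⟩, ?_⟩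
      rw [spanZ_normZ hr, span_resid i hz q]
  · rintro ⟨r, ⟨q, hqT, i, hcase⟩, rfl⟩
    have hq : q ≠ 0 := hT q hqT
    have hcq : cz q ≠ 0 := fun h => hq (cz_eq_zero.mp h)
    refine ⟨spanZ q, ⟨q, hqT, rfl⟩, cz q, Submodule.mem_span_singleton_self _, hcq, i, ?_⟩
    have h1 : cz q = (1 : ℂ) • cz q := (one_smul _ _).symm
    rcases hcase with ⟨hd, rfl⟩ | ⟨hr, rfl⟩
    · left
      constructor
      · rw [h1]; exact (P_ne_iff i one_ne_zero q).mpr hd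
      · rw [h1, span_P i one_ne_zero hd, spanZ_normZ (vz_ne_zero i)]
    · right
      constructor
      · rw [h1]; exact (resid_ne_iff i one_ne_zero q).mpr hr
      · rw [h1, span_resid i one_ne_zero q, spanZ_normZ hr]

def L0 : List Z3 :=
  [
   (1,0,0), (0,1,0), (0,0,1), (0,1,-1), (0,1,1), (1,0,-1), (1,0,1), (1,-1,0), (1,1,0), (1,1,1),
   (1,-1,-1), (1,-1,1), (1,1,-1)]

def L1 : List Z3 :=
  [
   (1,0,0), (1,0,-1), (1,0,1), (1,-1,0), (1,1,0), (1,1,1), (2,-1,-1), (1,-1,-1), (2,1,1),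
   (1,-1,1), (2,1,-1), (1,1,-1), (2,-1,1), (0,1,0), (0,1,-1), (0,1,1), (1,-2,1), (1,2,-1),
   (1,2,1), (1,-2,-1), (0,0,1), (1,1,-2), (1,-1,2), (1,-1,-2), (1,1,2)]

def L2 : List Z3 :=
  [
   (1,0,0), (1,0,-1), (1,0,1), (1,-1,0), (1,1,0), (1,1,1), (2,-1,-1), (1,-1,-1), (2,1,1),
   (1,-1,1), (2,1,-1), (1,1,-1), (2,-1,1), (0,0,1), (0,1,-1), (0,1,1), (1,1,-2), (1,-1,-2),
   (1,2,-1), (1,-2,-1), (1,1,2), (1,-1,2), (1,-2,1), (1,2,1), (0,1,0), (2,0,-1), (2,-1,0),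
   (3,-2,-3), (3,-3,-2), (4,-1,-5), (4,-5,-1), (2,0,1), (2,1,0), (3,2,3), (3,3,2), (4,5,1),
   (4,1,5), (3,2,-3), (3,3,-2), (4,1,-5), (4,5,-1), (3,-2,3), (3,-3,2), (4,-5,1), (4,-1,5),
   (0,2,-1), (1,-2,0), (2,-3,3), (1,-4,5), (5,-4,1), (1,2,0), (2,3,-3), (1,4,-5), (5,4,-1),
   (0,2,1), (2,3,3), (5,4,1), (1,4,5), (2,-3,-3), (5,-4,-1), (1,-4,-5), (0,1,-2), (1,0,-2),
   (1,5,-4), (5,1,-4), (1,0,2), (1,-5,4), (5,-1,4), (0,1,2), (5,-1,-4), (1,-5,-4), (5,1,4),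
   (1,5,4)]

def L3 : List Z3 :=
  [
   (1,0,0), (1,0,-1), (1,0,1), (1,-1,0), (1,1,0), (1,1,1), (2,-1,-1), (1,-1,-1), (2,1,1),
   (1,-1,1), (2,1,-1), (1,1,-1), (2,-1,1), (0,0,1), (0,1,-1), (0,1,1), (1,1,-2), (1,-1,-2),
   (1,2,-1), (1,-2,-1), (1,1,2), (1,-1,2), (1,-2,1), (1,2,1), (0,1,0), (2,0,-1), (2,-1,0),
   (3,-2,-3), (3,-3,-2), (4,-1,-5), (4,-5,-1), (2,0,1), (2,1,0), (3,2,3), (3,3,2), (4,5,1),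
   (4,1,5), (3,2,-3), (3,3,-2), (4,1,-5), (4,5,-1), (3,-2,3), (3,-3,2), (4,-5,1), (4,-1,5),
   (0,1,-2), (1,0,-2), (2,3,-3), (1,5,-4), (5,1,-4), (0,1,2), (2,-3,-3), (5,-1,-4), (1,-5,-4),
   (0,2,-1), (1,2,0), (1,4,-5), (5,4,-1), (0,2,1), (1,-2,0), (5,-4,-1), (1,-4,-5), (1,0,2),
   (2,3,3), (5,1,4), (1,5,4), (2,-3,3), (1,-5,4), (5,-1,4), (1,-4,5), (5,-4,1), (5,4,1),
   (1,4,5), (4,-1,-1), (4,1,-1), (4,-1,1), (0,2,3), (3,-2,0), (6,-5,-5), (6,1,-1), (1,1,-6),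
   (5,-5,-6), (11,-4,-7), (7,-4,-11), (0,3,2), (3,0,-2), (6,-1,1), (1,-6,1), (5,-6,-5),
   (11,-7,-4), (7,-11,-4), (0,1,5), (4,0,-5), (4,-1,0), (4,-3,-3), (9,-2,-9), (3,3,-10),
   (14,-1,-13), (2,7,-5), (4,-11,-7), (0,5,1), (4,0,-1), (4,-5,0), (3,-10,3), (9,-9,-2),
   (14,-13,-1), (2,-5,7), (4,-7,-11), (4,1,1), (3,2,0), (6,5,5), (5,5,6), (1,-1,6), (11,4,7),
   (7,4,11), (3,0,2), (5,6,5), (1,6,-1), (11,7,4), (7,11,4), (4,0,1), (4,5,0), (4,3,3),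
   (3,10,-3), (9,9,2), (2,5,-7), (14,13,1), (4,7,11), (4,0,5), (4,1,0), (9,2,9), (3,-3,10),
   (2,-7,5), (14,1,13), (4,11,7), (0,2,-3), (6,-1,-1), (6,5,-5), (5,5,-6), (1,-1,-6),
   (7,4,-11), (11,4,-7), (0,3,-2), (6,1,1), (1,6,1), (5,6,-5), (7,11,-4), (11,7,-4), (0,1,-5),
   (4,3,-3), (9,2,-9), (3,-3,-10), (4,11,-7), (14,1,-13), (2,-7,-5), (0,5,-1), (3,10,3),
   (9,9,-2), (4,7,-11), (14,13,-1), (2,5,7), (6,-5,5), (1,1,6), (5,-5,6), (7,-4,11), (11,-4,7),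
   (5,-6,5), (1,-6,-1), (7,-11,4), (11,-7,4), (4,-3,3), (3,-10,-3), (9,-9,2), (4,-7,11),
   (2,-5,-7), (14,-13,1), (9,-2,9), (3,3,10), (4,-11,7), (2,7,5), (14,-1,13), (1,-4,1),
   (1,4,-1), (1,-4,-1), (2,0,3), (2,-3,0), (0,4,-5), (1,0,5), (1,-4,0), (2,-9,9), (3,-4,3),
   (1,-14,13), (7,2,-5), (0,4,-1), (5,0,1), (5,-4,0), (10,-3,-3), (13,-14,1), (5,-2,-7),
   (1,4,1), (2,0,-3), (2,3,0), (1,0,-5), (1,4,0), (2,9,-9), (3,4,-3), (1,14,-13), (7,-2,5),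
   (5,0,-1), (5,4,0), (10,3,3), (13,14,-1), (5,2,7), (0,4,1), (10,3,-3), (3,4,3), (5,2,-7),
   (13,14,1), (0,4,5), (2,9,9), (7,-2,-5), (1,14,13), (10,-3,3), (3,-4,-3), (5,-2,7),
   (13,-14,-1), (2,-9,-9), (7,2,5), (1,-14,-13), (1,1,-4), (1,-1,4), (1,-1,-4), (0,5,-4),
   (1,0,-4), (1,5,0), (3,3,-4), (1,13,-14), (7,-5,2), (0,1,-4), (5,0,-4), (5,1,0), (13,1,-14),
   (5,-7,-2), (1,1,4), (1,0,4), (1,-5,0), (3,-3,4), (1,-13,14), (7,5,-2), (5,0,4), (5,-1,0),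
   (13,-1,14), (5,7,2), (0,1,4), (3,-3,-4), (5,7,-2), (13,-1,-14), (0,5,4), (7,5,2),
   (1,-13,-14), (3,3,4), (5,-7,2), (13,1,14), (7,-5,-2), (1,13,14)]

def W1 : List (Z3 × Fin 13 × Bool) :=
  [
   ((1,0,0),0,true), ((1,0,0),5,true), ((1,0,0),5,false), ((1,0,0),7,true), ((1,0,0),7,false),
   ((1,0,0),9,true), ((1,0,0),9,false), ((1,0,0),10,true), ((1,0,0),10,false),
   ((1,0,0),11,true), ((1,0,0),11,false), ((1,0,0),12,true), ((1,0,0),12,false),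
   ((0,1,0),0,false), ((0,1,0),3,true), ((0,1,0),3,false), ((0,1,0),9,false),
   ((0,1,0),10,false), ((0,1,0),11,false), ((0,1,0),12,false), ((0,0,1),0,false),
   ((0,0,1),9,false), ((0,0,1),10,false), ((0,0,1),11,false), ((0,0,1),12,false)]

def W2 : List (Z3 × Fin 13 × Bool) :=
  [
   ((1,0,0),0,true), ((1,0,0),5,true), ((1,0,0),5,false), ((1,0,0),7,true), ((1,0,0),7,false),
   ((1,0,0),9,true), ((1,0,0),9,false), ((1,0,0),10,true), ((1,0,0),10,false),
   ((1,0,0),11,true), ((1,0,0),11,false), ((1,0,0),12,true), ((1,0,0),12,false),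
   ((1,0,-1),0,false), ((1,0,-1),3,true), ((1,0,-1),4,true), ((1,0,-1),7,false),
   ((1,0,-1),8,false), ((1,0,-1),10,false), ((1,0,-1),12,false), ((1,0,1),7,false),
   ((1,0,1),8,false), ((1,0,1),9,false), ((1,0,1),11,false), ((1,-1,0),0,false),
   ((2,-1,-1),1,false), ((2,-1,-1),2,false), ((2,-1,-1),6,false), ((2,-1,-1),8,false),
   ((2,-1,-1),11,false), ((2,-1,-1),12,false), ((2,1,1),1,false), ((2,1,1),2,false),
   ((2,1,1),5,false), ((2,1,1),7,false), ((2,1,1),11,false), ((2,1,1),12,false),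
   ((2,1,-1),6,false), ((2,1,-1),7,false), ((2,1,-1),9,false), ((2,1,-1),10,false),
   ((2,-1,1),5,false), ((2,-1,1),8,false), ((2,-1,1),9,false), ((2,-1,1),10,false),
   ((1,-2,1),0,false), ((1,-2,1),2,false), ((1,-2,1),4,false), ((1,-2,1),10,false),
   ((1,-2,1),12,false), ((1,2,-1),2,false), ((1,2,-1),4,false), ((1,2,-1),9,false),
   ((1,2,-1),11,false), ((1,2,1),0,false), ((1,2,1),3,false), ((1,2,1),10,false),
   ((1,2,1),12,false), ((1,-2,-1),3,false), ((1,-2,-1),9,false), ((1,-2,-1),11,false),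
   ((1,1,-2),0,false), ((1,1,-2),1,false), ((1,1,-2),10,false), ((1,1,-2),11,false),
   ((1,-1,2),1,false), ((1,-1,2),9,false), ((1,-1,2),12,false), ((1,-1,-2),0,false),
   ((1,-1,-2),9,false), ((1,-1,-2),12,false), ((1,1,2),10,false), ((1,1,2),11,false)]

def W3 : List (Z3 × Fin 13 × Bool) :=
  [
   ((1,0,0),0,true), ((1,0,0),5,true), ((1,0,0),5,false), ((1,0,0),7,true), ((1,0,0),7,false),
   ((1,0,0),9,true), ((1,0,0),9,false), ((1,0,0),10,true), ((1,0,0),10,false),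
   ((1,0,0),11,true), ((1,0,0),11,false), ((1,0,0),12,true), ((1,0,0),12,false),
   ((1,0,-1),0,false), ((1,0,-1),3,true), ((1,0,-1),4,true), ((1,0,-1),7,false),
   ((1,0,-1),8,false), ((1,0,-1),10,false), ((1,0,-1),12,false), ((1,0,1),7,false),
   ((1,0,1),8,false), ((1,0,1),9,false), ((1,0,1),11,false), ((1,-1,0),0,false),
   ((2,-1,-1),1,false), ((2,-1,-1),2,false), ((2,-1,-1),6,false), ((2,-1,-1),8,false),
   ((2,-1,-1),11,false), ((2,-1,-1),12,false), ((2,1,1),1,false), ((2,1,1),2,false),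
   ((2,1,1),5,false), ((2,1,1),7,false), ((2,1,1),11,false), ((2,1,1),12,false),
   ((2,1,-1),6,false), ((2,1,-1),7,false), ((2,1,-1),9,false), ((2,1,-1),10,false),
   ((2,-1,1),5,false), ((2,-1,1),8,false), ((2,-1,1),9,false), ((2,-1,1),10,false),
   ((1,1,-2),0,false), ((1,1,-2),1,false), ((1,1,-2),4,false), ((1,1,-2),10,false),
   ((1,1,-2),11,false), ((1,-1,-2),0,false), ((1,-1,-2),3,false), ((1,-1,-2),9,false),
   ((1,-1,-2),12,false), ((1,2,-1),0,false), ((1,2,-1),2,false), ((1,2,-1),9,false),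
   ((1,2,-1),11,false), ((1,-2,-1),0,false), ((1,-2,-1),2,false), ((1,-2,-1),9,false),
   ((1,-2,-1),11,false), ((1,1,2),1,false), ((1,1,2),3,false), ((1,1,2),10,false),
   ((1,1,2),11,false), ((1,-1,2),4,false), ((1,-1,2),9,false), ((1,-1,2),12,false),
   ((1,-2,1),10,false), ((1,-2,1),12,false), ((1,2,1),10,false), ((1,2,1),12,false),
   ((2,0,-1),3,false), ((2,0,-1),4,false), ((2,-1,0),4,false), ((3,-2,-3),0,false),
   ((3,-2,-3),2,false), ((3,-2,-3),3,false), ((3,-2,-3),4,false), ((3,-2,-3),7,false),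
   ((3,-2,-3),8,false), ((3,-2,-3),9,false), ((3,-2,-3),11,false), ((3,-3,-2),0,false),
   ((3,-3,-2),1,false), ((3,-3,-2),4,false), ((3,-3,-2),5,false), ((3,-3,-2),6,false),
   ((3,-3,-2),9,false), ((3,-3,-2),12,false), ((4,-1,-5),0,false), ((4,-1,-5),1,false),
   ((4,-1,-5),2,false), ((4,-1,-5),3,false), ((4,-1,-5),6,false), ((4,-1,-5),7,false),
   ((4,-1,-5),9,false), ((4,-1,-5),10,false), ((4,-1,-5),12,false), ((4,-5,-1),0,false),
   ((4,-5,-1),1,false), ((4,-5,-1),2,false), ((4,-5,-1),5,false), ((4,-5,-1),8,false),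
   ((4,-5,-1),9,false), ((4,-5,-1),10,false), ((4,-5,-1),11,false), ((2,0,1),3,false),
   ((3,2,3),2,false), ((3,2,3),3,false), ((3,2,3),7,false), ((3,2,3),8,false),
   ((3,2,3),10,false), ((3,2,3),12,false), ((3,3,2),1,false), ((3,3,2),5,false),
   ((3,3,2),6,false), ((3,3,2),10,false), ((3,3,2),11,false), ((4,5,1),1,false),
   ((4,5,1),2,false), ((4,5,1),3,false), ((4,5,1),6,false), ((4,5,1),7,false),
   ((4,5,1),9,false), ((4,5,1),10,false), ((4,5,1),12,false), ((4,1,5),1,false),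
   ((4,1,5),2,false), ((4,1,5),5,false), ((4,1,5),8,false), ((4,1,5),9,false),
   ((4,1,5),10,false), ((4,1,5),11,false), ((3,2,-3),0,false), ((3,2,-3),3,false),
   ((3,2,-3),4,false), ((3,2,-3),7,false), ((3,2,-3),8,false), ((3,2,-3),9,false),
   ((3,2,-3),11,false), ((3,3,-2),0,false), ((3,3,-2),3,false), ((3,3,-2),5,false),
   ((3,3,-2),6,false), ((3,3,-2),10,false), ((3,3,-2),11,false), ((4,1,-5),0,false),
   ((4,1,-5),4,false), ((4,1,-5),6,false), ((4,1,-5),8,false), ((4,1,-5),10,false),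
   ((4,1,-5),11,false), ((4,1,-5),12,false), ((4,5,-1),0,false), ((4,5,-1),5,false),
   ((4,5,-1),7,false), ((4,5,-1),9,false), ((4,5,-1),11,false), ((4,5,-1),12,false),
   ((3,-2,3),4,false), ((3,-2,3),7,false), ((3,-2,3),8,false), ((3,-2,3),10,false),
   ((3,-2,3),12,false), ((3,-3,2),5,false), ((3,-3,2),6,false), ((3,-3,2),9,false),
   ((3,-3,2),12,false), ((4,-5,1),4,false), ((4,-5,1),6,false), ((4,-5,1),8,false),
   ((4,-5,1),10,false), ((4,-5,1),11,false), ((4,-5,1),12,false), ((4,-1,5),5,false),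
   ((4,-1,5),7,false), ((4,-1,5),9,false), ((4,-1,5),11,false), ((4,-1,5),12,false),
   ((0,2,-1),5,false), ((0,2,-1),6,false), ((1,-2,0),6,false), ((2,-3,3),1,false),
   ((2,-3,3),2,false), ((1,-4,5),0,false), ((1,-4,5),1,false), ((1,-4,5),2,false),
   ((1,-4,5),4,false), ((1,-4,5),5,false), ((1,-4,5),9,false), ((1,-4,5),11,false),
   ((5,-4,1),0,false), ((5,-4,1),1,false), ((5,-4,1),2,false), ((5,-4,1),3,false),
   ((5,-4,1),9,false), ((5,-4,1),11,false), ((1,2,0),5,false), ((2,3,-3),1,false),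
   ((2,3,-3),2,false), ((1,4,-5),1,false), ((1,4,-5),2,false), ((1,4,-5),4,false),
   ((1,4,-5),6,false), ((1,4,-5),10,false), ((1,4,-5),12,false), ((5,4,-1),1,false),
   ((5,4,-1),2,false), ((5,4,-1),3,false), ((5,4,-1),10,false), ((5,4,-1),12,false),
   ((5,4,1),0,false), ((5,4,1),4,false), ((5,4,1),5,false), ((5,4,1),9,false),
   ((5,4,1),11,false), ((1,4,5),0,false), ((1,4,5),3,false), ((1,4,5),9,false),
   ((1,4,5),11,false), ((5,-4,-1),4,false), ((5,-4,-1),6,false), ((5,-4,-1),10,false),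
   ((5,-4,-1),12,false), ((1,-4,-5),3,false), ((1,-4,-5),10,false), ((1,-4,-5),12,false),
   ((0,1,-2),7,false), ((0,1,-2),8,false), ((1,0,-2),8,false), ((1,5,-4),0,false),
   ((1,5,-4),1,false), ((1,5,-4),2,false), ((1,5,-4),7,false), ((1,5,-4),9,false),
   ((1,5,-4),12,false), ((5,1,-4),0,false), ((5,1,-4),1,false), ((5,1,-4),2,false),
   ((5,1,-4),9,false), ((5,1,-4),12,false), ((1,0,2),7,false), ((1,-5,4),1,false),
   ((1,-5,4),2,false), ((1,-5,4),8,false), ((1,-5,4),10,false), ((1,-5,4),11,false),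
   ((5,-1,4),1,false), ((5,-1,4),2,false), ((5,-1,4),10,false), ((5,-1,4),11,false),
   ((5,-1,-4),0,false), ((5,-1,-4),8,false), ((5,-1,-4),10,false), ((5,-1,-4),11,false),
   ((1,-5,-4),0,false), ((1,-5,-4),10,false), ((1,-5,-4),11,false), ((5,1,4),7,false),
   ((5,1,4),9,false), ((5,1,4),12,false), ((1,5,4),9,false), ((1,5,4),12,false)]


def Wok (lc : List Z3) (w : Z3 × Fin 13 × Bool) : Prop :=
  w.1 ∈ lc ∧ (w.2.2 = true → dotZ (vz w.2.1) w.1 ≠ 0) ∧ (w.2.2 = false → residZ w.2.1 w.1 ≠ 0)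

instance (lc : List Z3) (w : Z3 × Fin 13 × Bool) : Decidable (Wok lc w) := by
  unfold Wok; infer_instance

def wMk (w : Z3 × Fin 13 × Bool) : Z3 :=
  if w.2.2 then normZ (vz w.2.1) else normZ (residZ w.2.1 w.1)

lemma step_eq {lc ln : List Z3} {W : List (Z3 × Fin 13 × Bool)}
    (h1 : ∀ q ∈ lc, ∀ i : Fin 13,
      (dotZ (vz i) q ≠ 0 → normZ (vz i) ∈ ln) ∧ (residZ i q ≠ 0 → normZ (residZ i q) ∈ ln))
    (h2 : ln = W.map wMk)
    (h3 : ∀ w ∈ W, Wok lc w) :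
    stepSet {q | q ∈ lc} = {q | q ∈ ln} := by
  ext r
  simp only [stepSet, Set.mem_setOf_eq]
  constructor
  · rintro ⟨q, hq, i, ⟨hd, rfl⟩ | ⟨hr, rfl⟩⟩
    · exact (h1 q hq i).1 hd
    · exact (h1 q hq i).2 hr
  · intro hr
    rw [h2, List.mem_map] at hr
    obtain ⟨w, hw, rfl⟩ := hr
    obtain ⟨hmem, hb1, hb2⟩ := h3 w hw
    refine ⟨w.1, hmem, w.2.1, ?_⟩
    rcases hb : w.2.2 with _ | _
    · right; exact ⟨hb2 hb, by rw [wMk, hb]; simp⟩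
    · left; exact ⟨hb1 hb, by rw [wMk, hb]; simp⟩

lemma S_eq_list : ∀ (n : ℕ) (l : List Z3), S n = spanZ '' {q | q ∈ l} →
    (∀ q ∈ l, q ≠ 0) → ∀ (ln : List Z3) (W : List (Z3 × Fin 13 × Bool)),
    (∀ q ∈ l, ∀ i : Fin 13,
      (dotZ (vz i) q ≠ 0 → normZ (vz i) ∈ ln) ∧ (residZ i q ≠ 0 → normZ (residZ i q) ∈ ln)) →
    ln = W.map wMk → (∀ w ∈ W, Wok l w) →
    S (n + 1) = spanZ '' {q | q ∈ ln} := by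
  intro n l h hnz ln W h1 h2 h3
  rw [S_succ_eq hnz h]
  exact congrArg (Set.image spanZ) (step_eq h1 h2 h3)

lemma S0_eq : S 0 = spanZ '' {q | q ∈ L0} := by
  have hL0 : L0 = (List.finRange 13).map fun i => normZ (vz i) := by decide
  ext L
  simp only [S, Set.mem_setOf_eq, Set.mem_image, hL0, List.mem_map, List.mem_finRange, true_and]
  constructor
  · rintro ⟨i, rfl⟩
    exact ⟨normZ (vz i), ⟨i, rfl⟩, by rw [spanZ_normZ (vz_ne_zero i), spanZ, ← v_eq]⟩
  · rintro ⟨r, ⟨i, rfl⟩, rfl⟩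
    exact ⟨i, by rw [spanZ_normZ (vz_ne_zero i), spanZ, ← v_eq]⟩

abbrev crossZ (a b : Z3) : Prop :=
  a.1 * b.2.1 = b.1 * a.2.1 ∧ a.1 * b.2.2 = b.1 * a.2.2 ∧ a.2.1 * b.2.2 = b.2.1 * a.2.2

lemma cross_of_span {a b : Z3} (h : spanZ a = spanZ b) : crossZ a b := by
  have hb : cz b ∈ spanZ a := by
    rw [h]; exact Submodule.mem_span_singleton_self _
  rw [spanZ, Submodule.mem_span_singleton] at hb
  obtain ⟨z, hz⟩ := hb
  have h0 : z * (a.1 : ℂ) = (b.1 : ℂ) := by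
    have := congrArg (· 0) hz; simpa [cz] using this
  have h1 : z * (a.2.1 : ℂ) = (b.2.1 : ℂ) := by
    have := congrArg (· 1) hz; simpa [cz] using this
  have h2 : z * (a.2.2 : ℂ) = (b.2.2 : ℂ) := by
    have := congrArg (· 2) hz; simpa [cz] using this
  refine ⟨?_, ?_, ?_⟩
  · have : (a.1 : ℂ) * (b.2.1 : ℂ) = (b.1 : ℂ) * (a.2.1 : ℂ) := by
      rw [← h1, ← h0]; ring
    exact_mod_cast this
  · have : (a.1 : ℂ) * (b.2.2 : ℂ) = (b.1 : ℂ) * (a.2.2 : ℂ) := by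
      rw [← h2, ← h0]; ring
    exact_mod_cast this
  · have : (a.2.1 : ℂ) * (b.2.2 : ℂ) = (b.2.1 : ℂ) * (a.2.2 : ℂ) := by
      rw [← h2, ← h1]; ring
    exact_mod_cast this


def beq3 (a b : Z3) : Bool := a.1 == b.1 && (a.2.1 == b.2.1 && a.2.2 == b.2.2)

lemma beq3_iff {a b : Z3} : beq3 a b = true ↔ a = b := by
  obtain ⟨x, y, z⟩ := a; obtain ⟨u, v, w⟩ := b
  simp [beq3, Prod.ext_iff]

def memB (x : Z3) (l : List Z3) : Bool := l.any (beq3 x)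

lemma memB_iff {x : Z3} {l : List Z3} : memB x l = true ↔ x ∈ l := by
  simp only [memB, List.any_eq_true, beq3_iff]
  constructor
  · rintro ⟨y, hy, rfl⟩; exact hy
  · intro h; exact ⟨x, h, rfl⟩

def h1B (lc ln : List Z3) : Bool :=
  ((List.finRange 13).all fun i => memB (normZ (vz i)) ln) &&
  (lc.all fun q => (List.finRange 13).all fun i =>
    (beq3 (residZ i q) 0) || memB (normZ (residZ i q)) ln)

lemma h1B_iff {lc ln : List Z3} (h : h1B lc ln = true) :
    ∀ q ∈ lc, ∀ i : Fin 13,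
      (dotZ (vz i) q ≠ 0 → normZ (vz i) ∈ ln) ∧ (residZ i q ≠ 0 → normZ (residZ i q) ∈ ln) := by
  rw [h1B, Bool.and_eq_true] at h
  intro q hq i
  constructor
  · intro _
    exact memB_iff.mp (List.all_eq_true.mp h.1 i (List.mem_finRange i))
  · intro hr
    have h2 := List.all_eq_true.mp (List.all_eq_true.mp h.2 q hq) i (List.mem_finRange i)
    rw [Bool.or_eq_true] at h2
    rcases h2 with h' | h'
    · exact absurd (beq3_iff.mp h') hr
    · exact memB_iff.mp h'

def wokB (lc : List Z3) (W : List (Z3 × Fin 13 × Bool)) : Bool :=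
  W.all fun w => memB w.1 lc &&
    (if w.2.2 then !(dotZ (vz w.2.1) w.1 == 0) else !(beq3 (residZ w.2.1 w.1) 0))

lemma wokB_iff {lc : List Z3} {W : List (Z3 × Fin 13 × Bool)} (h : wokB lc W = true) :
    ∀ w ∈ W, Wok lc w := by
  intro w hw
  have h2 := List.all_eq_true.mp h w hw
  rw [Bool.and_eq_true] at h2
  obtain ⟨ha, hb⟩ := h2
  refine ⟨memB_iff.mp ha, ?_, ?_⟩
  · intro hbt
    rw [hbt, if_pos rfl, Bool.not_eq_true'] at hb
    intro hd
    exact absurd (beq_iff_eq.mpr (by exact_mod_cast hd)) (by rw [hb]; simp)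
  · intro hbf
    rw [hbf] at hb
    simp only [Bool.false_eq_true, if_false, Bool.not_eq_true'] at hb
    intro hr
    exact absurd (beq3_iff.mpr hr) (by rw [hb]; simp)

def leqB : List Z3 → List Z3 → Bool
  | [], [] => true
  | x :: l, y :: m => beq3 x y && leqB l m
  | _, _ => false

lemma leqB_iff : ∀ {l m : List Z3}, leqB l m = true → l = m := by
  intro l
  induction l with
  | nil => intro m h; cases m with
    | nil => rfl
    | cons y m => simp [leqB] at h
  | cons x l ih =>
    intro m h
    cases m with
    | nil => simp [leqB] at h
    | cons y m =>
      rw [leqB, Bool.and_eq_true] at h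
      rw [beq3_iff.mp h.1, ih h.2]

def crossB (a b : Z3) : Bool :=
  (a.1 * b.2.1 == b.1 * a.2.1) && ((a.1 * b.2.2 == b.1 * a.2.2) && (a.2.1 * b.2.2 == b.2.1 * a.2.2))

lemma crossB_iff {a b : Z3} : crossB a b = true ↔ crossZ a b := by
  rw [crossB, Bool.and_eq_true, Bool.and_eq_true]
  exact ⟨fun h => ⟨beq_iff_eq.mp h.1, beq_iff_eq.mp h.2.1, beq_iff_eq.mp h.2.2⟩,
    fun h => ⟨beq_iff_eq.mpr h.1, beq_iff_eq.mpr h.2.1, beq_iff_eq.mpr h.2.2⟩⟩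

lemma crossZ_symm {a b : Z3} (h : crossZ a b) : crossZ b a :=
  ⟨h.1.symm, h.2.1.symm, h.2.2.symm⟩

lemma crossZ_refl (a : Z3) : crossZ a a := ⟨rfl, rfl, rfl⟩

def pkeyB : List Z3 → Bool
  | [] => true
  | a :: l => (l.all fun b => !(crossB a b)) && pkeyB l

lemma pkeyB_key : ∀ {l : List Z3}, pkeyB l = true →
    ∀ a ∈ l, ∀ b ∈ l, crossZ a b → a = b := by
  intro l
  induction l with
  | nil => intro _ a ha; exact absurd ha List.not_mem_nil
  | cons x l ih =>
    intro h a ha b hb hc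
    rw [pkeyB, Bool.and_eq_true] at h
    have hall : ∀ y ∈ l, ¬ crossZ x y := by
      intro y hy hcy
      have := List.all_eq_true.mp h.1 y hy
      rw [Bool.not_eq_true'] at this
      exact absurd (crossB_iff.mpr hcy) (by rw [this]; simp)
    rcases List.mem_cons.mp ha with rfl | ha' <;>
      rcases List.mem_cons.mp hb with rfl | hb'
    · rfl
    · exact absurd hc (hall b hb')
    · exact absurd (crossZ_symm hc) (hall a ha')
    · exact ih h.2 a ha' b hb' hc

lemma pkeyB_nodup : ∀ {l : List Z3}, pkeyB l = true → l.Nodup := by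
  intro l
  induction l with
  | nil => intro _; exact List.nodup_nil
  | cons x l ih =>
    intro h
    rw [pkeyB, Bool.and_eq_true] at h
    refine List.nodup_cons.mpr ⟨fun hc => ?_, ih h.2⟩
    have := List.all_eq_true.mp h.1 x hc
    rw [Bool.not_eq_true'] at this
    exact absurd (crossB_iff.mpr (crossZ_refl x)) (by rw [this]; simp)

def nzB (l : List Z3) : Bool := l.all fun q => !(beq3 q 0)

lemma nzB_iff {l : List Z3} (h : nzB l = true) : ∀ q ∈ l, q ≠ 0 := by
  intro q hq h0
  have h2 := List.all_eq_true.mp h q hq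
  rw [Bool.not_eq_true'] at h2
  exact absurd (beq3_iff.mpr h0) (by rw [h2]; simp)

set_option maxRecDepth 40000 in
lemma S3_eq : S 3 = spanZ '' {q | q ∈ L3} := by
  have e1 : S 1 = spanZ '' {q | q ∈ L1} :=
    S_eq_list 0 L0 S0_eq (nzB_iff (by decide)) L1 W1 (h1B_iff (by decide))
      (leqB_iff (by decide)) (wokB_iff (by decide))
  have e2 : S 2 = spanZ '' {q | q ∈ L2} :=
    S_eq_list 1 L1 e1 (nzB_iff (by decide)) L2 W2 (h1B_iff (by decide))
      (leqB_iff (by decide)) (wokB_iff (by decide))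
  exact S_eq_list 2 L2 e2 (nzB_iff (by decide)) L3 W3 (h1B_iff (by decide))
      (leqB_iff (by decide)) (wokB_iff (by decide))

set_option maxRecDepth 40000 in
theorem S3_card : (S 3).Finite ∧ (S 3).ncard = 265 := by
  have hpk : pkeyB L3 = true := by decide
  have hnodup : List.Nodup L3 := pkeyB_nodup hpk
  have key : ∀ a ∈ L3, ∀ b ∈ L3, crossZ a b → a = b := pkeyB_key hpk
  have hinj : Set.InjOn spanZ {q | q ∈ L3} := fun a ha b hb hab =>
    key a ha b hb (cross_of_span hab)
  constructor
  · rw [S3_eq]; exact (L3.finite_toSet).image _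
  · rw [S3_eq, Set.ncard_image_of_injOn hinj, ← List.coe_toFinset, Set.ncard_coe_finset,
      List.toFinset_card_of_nodup hnodup]
    decide
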